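/- The quantum exponential searching schedule with growth factor λ strictly between 1 and 4/3, applied to a search space of size S with unknown number t ≥ 1 of marked items, finds a marked item with expected total number of Grover iterations O(√(S/t)). -/

import Mathlib

/-- The Grover rotation angle: sin θ = √(t/S). -/
noncomputable def groverTheta (S t : ℕ) : ℝ := Real.arcsin (Real.sqrt ((t : ℝ) / S))

/-- Success probability of measuring a marked item after j Grover iterations. -/
noncomputable def successProb (S t : ℕ) (j : ℕ) : ℝ :=
  Real.sin ((2 * (j : ℝ) + 1) * groverTheta S t) ^ 2

/-- The cutoff ⌈l_r⌉ in round r of quantum exponential searching: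
l_r = min(λ^r, √S) starting from l = 1. -/
noncomputable def roundLen (S : ℕ) (lam : ℝ) (r : ℕ) : ℕ :=
  ⌈min (lam ^ r) (Real.sqrt (S : ℝ))⌉₊

/-- Failure probability of round r (j chosen uniformly in {0,…,⌈l_r⌉-1}). -/
noncomputable def roundFail (S t : ℕ) (lam : ℝ) (r : ℕ) : ℝ :=
  1 - (∑ j ∈ Finset.range (roundLen S lam r), successProb S t j) / roundLen S lam r

/-- Expected total number of Grover iterations of the exponential searching
schedule: round r is reached with probability ∏_{s<r}(fail s) and consumes on
average (1/⌈l_r⌉)Σ_{j<⌈l_r⌉} j iterations. -/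
noncomputable def expectedIterations (S t : ℕ) (lam : ℝ) : ℝ :=
  ∑' r : ℕ, (∏ s ∈ Finset.range r, roundFail S t lam s) *
    ((∑ j ∈ Finset.range (roundLen S lam r), (j : ℝ)) / roundLen S lam r)

open Real Finset

lemma bbhm_sum_id (n : ℕ) : ∑ j ∈ Finset.range n, (j : ℝ) = n * (n - 1) / 2 := by
  induction n with
  | zero => simp
  | succ k ih => rw [Finset.sum_range_succ, ih]; push_cast; ring

lemma bbhm_tele (θ : ℝ) (m : ℕ) :
    2 * Real.sin (2 * θ) * ∑ j ∈ Finset.range m, Real.cos (2 * ((2 * (j : ℝ) + 1) * θ))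
      = Real.sin (4 * m * θ) := by
  induction m with
  | zero => simp
  | succ k ih =>
    have h := Real.sin_sub_sin (4 * ((k : ℝ) + 1) * θ) (4 * (k : ℝ) * θ)
    have e1 : (4 * ((k : ℝ) + 1) * θ - 4 * (k : ℝ) * θ) / 2 = 2 * θ := by ring
    have e2 : (4 * ((k : ℝ) + 1) * θ + 4 * (k : ℝ) * θ) / 2 = 2 * ((2 * (k : ℝ) + 1) * θ) := by
      ring
    rw [e1, e2] at h
    rw [Finset.sum_range_succ, mul_add, ih]
    push_cast
    linarith [h]

lemma bbhm_sum_success (S t m : ℕ) (hs : Real.sin (2 * groverTheta S t) ≠ 0) :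
    ∑ j ∈ Finset.range m, successProb S t j
      = m / 2 - Real.sin (4 * m * groverTheta S t) / (4 * Real.sin (2 * groverTheta S t)) := by
  set θ := groverTheta S t with hθ
  have h : ∑ j ∈ Finset.range m, successProb S t j
      = ∑ j ∈ Finset.range m, (1 / 2 - Real.cos (2 * ((2 * (j : ℝ) + 1) * θ)) / 2) := by
    refine Finset.sum_congr rfl fun j _ => ?_
    rw [successProb, Real.sin_sq_eq_half_sub]
  rw [h, Finset.sum_sub_distrib]
  have h2 : ∑ j ∈ Finset.range m, Real.cos (2 * ((2 * (j : ℝ) + 1) * θ)) / 2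
      = (∑ j ∈ Finset.range m, Real.cos (2 * ((2 * (j : ℝ) + 1) * θ))) / 2 := by
    rw [Finset.sum_div]
  rw [h2]
  have h3 := bbhm_tele θ m
  have h4 : Real.sin (4 * m * θ) / (4 * Real.sin (2 * θ))
      = (∑ j ∈ Finset.range m, Real.cos (2 * ((2 * (j : ℝ) + 1) * θ))) / 2 := by
    rw [div_eq_iff (mul_ne_zero four_ne_zero hs), ← h3]; ring
  rw [h4, Finset.sum_const, Finset.card_range, nsmul_eq_mul]; ring

lemma bbhm_one_le_roundLen (S : ℕ) (lam : ℝ) (r : ℕ) (hS : 1 ≤ S) (hlam : 1 ≤ lam) :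
    1 ≤ roundLen S lam r := by
  rw [roundLen]
  have hS0 : (0:ℝ) < (S:ℝ) := by exact_mod_cast Nat.lt_of_lt_of_le Nat.zero_lt_one hS
  exact Nat.ceil_pos.2 (lt_min (by positivity) (Real.sqrt_pos.2 hS0))

lemma bbhm_roundFail_eq (S t : ℕ) (lam : ℝ) (r : ℕ)
    (hs : Real.sin (2 * groverTheta S t) ≠ 0) (hm : roundLen S lam r ≠ 0) :
    roundFail S t lam r = 1 / 2 + Real.sin (4 * (roundLen S lam r) * groverTheta S t)
      / (4 * (roundLen S lam r) * Real.sin (2 * groverTheta S t)) := by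
  rw [roundFail, bbhm_sum_success S t _ hs]
  have hm' : ((roundLen S lam r : ℝ)) ≠ 0 := Nat.cast_ne_zero.2 hm
  field_simp
  ring

lemma bbhm_sin_le (θ : ℝ) (m : ℕ) (hm : 1 ≤ m) (hθ1 : Real.pi / 4 ≤ θ) (hθ2 : θ ≤ Real.pi / 2) :
    Real.sin (4 * m * θ) ≤ m * Real.sin (2 * θ) := by
  have hπ := Real.pi_pos
  set δ := Real.pi - 2 * θ with hδ
  have hδ0 : 0 ≤ δ := by simp [hδ]; linarith
  have hδ2 : δ ≤ Real.pi / 2 := by simp [hδ]; linarith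
  have hs2 : Real.sin (2 * θ) = Real.sin δ := by rw [hδ, Real.sin_pi_sub]
  have h4m : Real.sin (4 * m * θ) = -Real.sin (2 * m * δ) := by
    have e : (4 : ℝ) * m * θ = (m : ℝ) * (2 * Real.pi) - 2 * m * δ := by rw [hδ]; ring
    rw [e, Real.sin_sub]
    have hsn : Real.sin ((m : ℝ) * (2 * Real.pi)) = 0 := by
      have := Real.sin_nat_mul_pi (2 * m)
      push_cast at this
      convert this using 2
      ring
    rw [hsn, Real.cos_nat_mul_two_pi]
    ring
  rw [hs2, h4m]
  have hm1 : (1 : ℝ) ≤ m := by exact_mod_cast hm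
  rcases le_or_gt (2 * (m : ℝ) * δ) Real.pi with hle | hlt
  · have h1 : 0 ≤ Real.sin (2 * m * δ) :=
      Real.sin_nonneg_of_nonneg_of_le_pi (by positivity) hle
    have h2 : 0 ≤ Real.sin δ := Real.sin_nonneg_of_nonneg_of_le_pi hδ0 (by linarith)
    nlinarith
  · have h1 : 2 / Real.pi * δ ≤ Real.sin δ := Real.mul_le_sin hδ0 hδ2
    have h2 : -1 ≤ Real.sin (2 * m * δ) := Real.neg_one_le_sin _
    have h3 : (1 : ℝ) ≤ (m : ℝ) * (2 / Real.pi * δ) := by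
      rw [div_mul_eq_mul_div, mul_div_assoc'] at *
      rw [le_div_iff₀ hπ] at *
      nlinarith
    have h4 : (m : ℝ) * (2 / Real.pi * δ) ≤ (m : ℝ) * Real.sin δ :=
      mul_le_mul_of_nonneg_left h1 (by positivity)
    linarith

lemma bbhm_fail_le (S t : ℕ) (lam : ℝ) (r : ℕ)
    (hs : 0 < Real.sin (2 * groverTheta S t)) (hm : 1 ≤ roundLen S lam r)
    (hcrit : 1 ≤ (roundLen S lam r : ℝ) * Real.sin (2 * groverTheta S t)
      ∨ (Real.pi / 4 ≤ groverTheta S t ∧ groverTheta S t ≤ Real.pi / 2)) :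
    roundFail S t lam r ≤ 3 / 4 := by
  set θ := groverTheta S t
  set m := roundLen S lam r with hmdef
  have hm0 : (0 : ℝ) < m := by exact_mod_cast hm
  rw [bbhm_roundFail_eq S t lam r (ne_of_gt hs) (by omega)]
  have key : Real.sin (4 * (m : ℝ) * θ) ≤ (m : ℝ) * Real.sin (2 * θ) := by
    rcases hcrit with h | ⟨h1, h2⟩
    · exact le_trans (Real.sin_le_one _) h
    · exact bbhm_sin_le θ m hm h1 h2
  have hpos : 0 < 4 * (m : ℝ) * Real.sin (2 * θ) := by positivity
  have : Real.sin (4 * (m : ℝ) * θ) / (4 * (m : ℝ) * Real.sin (2 * θ)) ≤ 1 / 4 := by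
    rw [div_le_div_iff₀ hpos (by norm_num)]
    nlinarith
  linarith

lemma bbhm_fail_nonneg (S t : ℕ) (lam : ℝ) (r : ℕ) (hm : 1 ≤ roundLen S lam r)
    (ht : t ≤ S) : 0 ≤ roundFail S t lam r := by
  rw [roundFail, sub_nonneg]
  set m := roundLen S lam r
  have hm0 : (0 : ℝ) < m := by exact_mod_cast hm
  rw [div_le_one hm0]
  calc ∑ j ∈ Finset.range m, successProb S t j ≤ ∑ j ∈ Finset.range m, 1 := by
        refine Finset.sum_le_sum fun j _ => ?_
        exact Real.sin_sq_le_one _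
    _ = m := by simp

lemma bbhm_fail_le_one (S t : ℕ) (lam : ℝ) (r : ℕ) : roundFail S t lam r ≤ 1 := by
  rw [roundFail]
  have : 0 ≤ (∑ j ∈ Finset.range (roundLen S lam r), successProb S t j) / roundLen S lam r := by
    apply div_nonneg _ (Nat.cast_nonneg _)
    exact Finset.sum_nonneg fun j _ => sq_nonneg _
  linarith

lemma bbhm_cost_le (S : ℕ) (lam : ℝ) (r : ℕ) (hS : 1 ≤ S) (hlam : 1 ≤ lam) :
    (∑ j ∈ Finset.range (roundLen S lam r), (j : ℝ)) / roundLen S lam r ≤ lam ^ r / 2 := by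
  have hm := bbhm_one_le_roundLen S lam r hS hlam
  set m := roundLen S lam r with hmdef
  have hm0 : (0 : ℝ) < m := by exact_mod_cast hm
  rw [bbhm_sum_id]
  have e : ((m : ℝ) * ((m : ℝ) - 1) / 2) / m = ((m : ℝ) - 1) / 2 := by
    field_simp
  rw [e]
  have h1 : (m : ℝ) < min (lam ^ r) (Real.sqrt S) + 1 := by
    rw [hmdef, roundLen]
    exact Nat.ceil_lt_add_one (le_min (by positivity) (Real.sqrt_nonneg _))
  have h2 : min (lam ^ r) (Real.sqrt S) ≤ lam ^ r := min_le_left _ _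
  linarith

lemma bbhm_tail_prod (S t : ℕ) (lam : ℝ) (r₀ k : ℕ)
    (h0 : ∀ r, 0 ≤ roundFail S t lam r)
    (h34 : ∀ r, r₀ ≤ r → roundFail S t lam r ≤ 3 / 4) :
    ∏ i ∈ Finset.range k, roundFail S t lam (r₀ + i) ≤ (3 / 4 : ℝ) ^ k := by
  induction k with
  | zero => simp
  | succ n ih =>
    rw [Finset.prod_range_succ, pow_succ]
    apply mul_le_mul ih (h34 _ (Nat.le_add_right _ _)) (h0 _) (by positivity)

lemma bbhm_tsum_bound (S t : ℕ) (lam : ℝ) (h1 : 1 < lam) (h2 : lam < 4 / 3)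
    (hS : 1 ≤ S) (ht : t ≤ S) (r₀ : ℕ)
    (h34 : ∀ r, r₀ ≤ r → roundFail S t lam r ≤ 3 / 4) :
    expectedIterations S t lam
      ≤ lam ^ r₀ * (1 / (2 * (lam - 1)) + 2 / (4 - 3 * lam)) := by
  have hlam1 : 1 ≤ lam := h1.le
  have hfail0 : ∀ r, 0 ≤ roundFail S t lam r := fun r =>
    bbhm_fail_nonneg S t lam r (bbhm_one_le_roundLen S lam r hS hlam1) ht
  have hfail1 : ∀ r, roundFail S t lam r ≤ 1 := fun r => bbhm_fail_le_one S t lam r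
  set f : ℕ → ℝ := fun r => (∏ s ∈ Finset.range r, roundFail S t lam s) *
    ((∑ j ∈ Finset.range (roundLen S lam r), (j : ℝ)) / roundLen S lam r) with hf
  set g : ℕ → ℝ := fun r => lam ^ (min r r₀) / 2 * (3 * lam / 4) ^ (r - r₀) with hg
  have hcost : ∀ r, (∑ j ∈ Finset.range (roundLen S lam r), (j : ℝ)) / roundLen S lam r
      ≤ lam ^ r / 2 := fun r => bbhm_cost_le S lam r hS hlam1
  have hcost0 : ∀ r, 0 ≤ (∑ j ∈ Finset.range (roundLen S lam r), (j : ℝ)) / roundLen S lam r :=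
    fun r => div_nonneg (Finset.sum_nonneg fun j _ => Nat.cast_nonneg _) (Nat.cast_nonneg _)
  have hprod0 : ∀ r, 0 ≤ ∏ s ∈ Finset.range r, roundFail S t lam s :=
    fun r => Finset.prod_nonneg fun s _ => hfail0 s
  have hprod1 : ∀ r, ∏ s ∈ Finset.range r, roundFail S t lam s ≤ 1 :=
    fun r => Finset.prod_le_one (fun s _ => hfail0 s) (fun s _ => hfail1 s)
  have hf0 : ∀ r, 0 ≤ f r := fun r => mul_nonneg (hprod0 r) (hcost0 r)
  have hfg : ∀ r, f r ≤ g r := by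
    intro r
    rcases le_or_gt r₀ r with hr | hr
    · obtain ⟨k, rfl⟩ : ∃ k, r = r₀ + k := ⟨r - r₀, by omega⟩
      have hsplit : ∏ s ∈ Finset.range (r₀ + k), roundFail S t lam s
          = (∏ s ∈ Finset.range r₀, roundFail S t lam s) *
            ∏ i ∈ Finset.range k, roundFail S t lam (r₀ + i) := Finset.prod_range_add _ _ _
      have hp : ∏ s ∈ Finset.range (r₀ + k), roundFail S t lam s ≤ (3 / 4 : ℝ) ^ k := by
        rw [hsplit]
        calc _ ≤ 1 * ((3 / 4 : ℝ) ^ k) := by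
              apply mul_le_mul (hprod1 r₀) (bbhm_tail_prod S t lam r₀ k hfail0 h34)
                (Finset.prod_nonneg fun i _ => hfail0 _) zero_le_one
          _ = (3 / 4 : ℝ) ^ k := one_mul _
      have : f (r₀ + k) ≤ (3 / 4 : ℝ) ^ k * (lam ^ (r₀ + k) / 2) :=
        mul_le_mul hp (hcost _) (hcost0 _) (by positivity)
      refine le_trans this (le_of_eq ?_)
      rw [hg]
      simp only [min_eq_right (Nat.le_add_right r₀ k), Nat.add_sub_cancel_left]
      rw [pow_add, show (3 * lam / 4 : ℝ) = 3 / 4 * lam by ring, mul_pow]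
      ring
    · have : f r ≤ 1 * (lam ^ r / 2) :=
        mul_le_mul (hprod1 r) (hcost r) (hcost0 r) zero_le_one
      refine le_trans this (le_of_eq ?_)
      rw [hg]
      simp only [min_eq_left hr.le, Nat.sub_eq_zero_of_le hr.le, pow_zero, one_mul, mul_one]
  have hratio0 : (0 : ℝ) ≤ 3 * lam / 4 := by positivity
  have hratio1 : 3 * lam / 4 < 1 := by linarith
  have hgsum : Summable g := by
    rw [← summable_nat_add_iff r₀]
    have : (fun n => g (n + r₀)) = fun n => lam ^ r₀ / 2 * (3 * lam / 4) ^ n := by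
      funext n
      rw [hg]
      simp [min_eq_right (Nat.le_add_left r₀ n), Nat.add_sub_cancel]
    rw [this]
    exact (summable_geometric_of_lt_one hratio0 hratio1).mul_left _
  have hfsum : Summable f := Summable.of_nonneg_of_le hf0 hfg hgsum
  have hle : expectedIterations S t lam ≤ ∑' r, g r := by
    rw [expectedIterations]
    exact Summable.tsum_le_tsum hfg hfsum hgsum
  have hgval : ∑' r, g r = (∑ r ∈ Finset.range r₀, g r) + ∑' n, g (n + r₀) :=
    (Summable.sum_add_tsum_nat_add r₀ hgsum).symm
  have hhead : ∑ r ∈ Finset.range r₀, g r ≤ lam ^ r₀ * (1 / (2 * (lam - 1))) := by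
    have : ∀ r ∈ Finset.range r₀, g r = lam ^ r / 2 := by
      intro r hr
      rw [Finset.mem_range] at hr
      rw [hg]
      simp [min_eq_left hr.le, Nat.sub_eq_zero_of_le hr.le]
    rw [Finset.sum_congr rfl this, ← Finset.sum_div]
    have hgeom : ∑ r ∈ Finset.range r₀, lam ^ r = (lam ^ r₀ - 1) / (lam - 1) :=
      geom_sum_eq (ne_of_gt h1) r₀
    rw [hgeom, div_div]
    have e : lam ^ r₀ * (1 / (2 * (lam - 1))) = lam ^ r₀ / ((lam - 1) * 2) := by
      rw [mul_one_div, mul_comm (2:ℝ)]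
    rw [e, div_le_div_iff_of_pos_right (by nlinarith : (0:ℝ) < (lam - 1) * 2)]
    linarith
  have htail : ∑' n, g (n + r₀) = lam ^ r₀ * (2 / (4 - 3 * lam)) := by
    have : (fun n => g (n + r₀)) = fun n => lam ^ r₀ / 2 * (3 * lam / 4) ^ n := by
      funext n
      rw [hg]
      simp [min_eq_right (Nat.le_add_left r₀ n), Nat.add_sub_cancel]
    rw [this, tsum_mul_left, tsum_geometric_of_lt_one hratio0 hratio1]
    have h4 : (4:ℝ) - 3 * lam ≠ 0 := ne_of_gt (by linarith)
    have h5 : (1:ℝ) - 3 * lam / 4 ≠ 0 := by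
      intro h; apply h4; linarith [h]
    field_simp
    ring
  calc expectedIterations S t lam ≤ ∑' r, g r := hle
    _ = (∑ r ∈ Finset.range r₀, g r) + ∑' n, g (n + r₀) := hgval
    _ ≤ lam ^ r₀ * (1 / (2 * (lam - 1))) + lam ^ r₀ * (2 / (4 - 3 * lam)) := by
        rw [htail]; linarith [hhead]
    _ = lam ^ r₀ * (1 / (2 * (lam - 1)) + 2 / (4 - 3 * lam)) := by ring


set_option maxHeartbeats 1000000 in
/-- Quantum exponential searching (BBHM) with growth factor 1 < λ < 4/3 finds a
marked item among S items with t ≥ 1 marked using an expected total number of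
Grover iterations in O(√(S/t)). -/
theorem bbhm_expected_iterations (lam : ℝ) (h1 : 1 < lam) (h2 : lam < 4 / 3) :
    ∃ c : ℝ, 0 < c ∧ ∀ S t : ℕ, 1 ≤ t → t ≤ S →
      expectedIterations S t lam ≤ c * Real.sqrt ((S : ℝ) / t) := by
  classical
  have hK : (0:ℝ) < 1 / (2 * (lam - 1)) + 2 / (4 - 3 * lam) := by
    have ha : (0:ℝ) < 2 * (lam - 1) := by linarith
    have hb : (0:ℝ) < 4 - 3 * lam := by linarith
    positivity
  refine ⟨lam * (1 / (2 * (lam - 1)) + 2 / (4 - 3 * lam)), by nlinarith, ?_⟩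
  intro S t ht hts
  have hS : 1 ≤ S := le_trans ht hts
  have hS0 : (0:ℝ) < (S:ℝ) := by exact_mod_cast lt_of_lt_of_le Nat.zero_lt_one hS
  have ht0 : (0:ℝ) < (t:ℝ) := by exact_mod_cast ht
  have hts' : (t:ℝ) ≤ (S:ℝ) := by exact_mod_cast hts
  have hfrac0 : 0 < (t:ℝ)/S := by positivity
  have hfrac1 : (t:ℝ)/S ≤ 1 := by rw [div_le_one hS0]; exact hts'
  set θ := groverTheta S t with hθdef
  have hθ0 : 0 ≤ θ := Real.arcsin_nonneg.2 (Real.sqrt_nonneg _)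
  have hθ2 : θ ≤ Real.pi / 2 := Real.arcsin_le_pi_div_two _
  have hsinθ : Real.sin θ = Real.sqrt ((t:ℝ)/S) := by
    rw [hθdef, groverTheta]
    exact Real.sin_arcsin (le_trans (by norm_num) (Real.sqrt_nonneg _))
      (Real.sqrt_le_one.2 hfrac1)
  have hcosθ : Real.cos θ = Real.sqrt (1 - (t:ℝ)/S) := by
    rw [hθdef, groverTheta, Real.cos_arcsin, Real.sq_sqrt hfrac0.le]
  have hs2 : Real.sin (2*θ) = 2 * Real.sqrt ((t:ℝ)/S) * Real.sqrt (1 - (t:ℝ)/S) := by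
    rw [Real.sin_two_mul, hsinθ, hcosθ]
  have hsqrtSt1 : 1 ≤ Real.sqrt ((S:ℝ)/t) := Real.one_le_sqrt.2 ((one_le_div ht0).2 hts')
  obtain ⟨r₀, h34, hr₀⟩ : ∃ r₀ : ℕ, (∀ r, r₀ ≤ r → roundFail S t lam r ≤ 3/4) ∧
      lam ^ r₀ ≤ lam * Real.sqrt ((S:ℝ)/t) := by
    rcases eq_or_lt_of_le hts with heq | hlt
    · -- t = S : every round succeeds with certainty
      refine ⟨0, fun r _ => ?_, by rw [pow_zero]; nlinarith [hsqrtSt1]⟩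
      have hθval : θ = Real.pi / 2 := by
        rw [hθdef, groverTheta, heq, div_self (ne_of_gt hS0), Real.sqrt_one, Real.arcsin_one]
      have hsp : ∀ j, successProb S t j = 1 := by
        intro j
        rw [successProb, ← hθdef, hθval]
        rw [show (2*(j:ℝ)+1) * (Real.pi/2) = (j:ℝ)*Real.pi + Real.pi/2 by ring,
          Real.sin_add_pi_div_two]
        have h0 : Real.sin ((j:ℝ)*Real.pi) = 0 := Real.sin_nat_mul_pi j
        nlinarith [Real.sin_sq_add_cos_sq ((j:ℝ)*Real.pi)]
      have hm := bbhm_one_le_roundLen S lam r hS h1.le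
      have hm0 : ((roundLen S lam r : ℝ)) ≠ 0 := by
        exact_mod_cast Nat.one_le_iff_ne_zero.1 hm
      rw [roundFail]
      have e : ∑ j ∈ Finset.range (roundLen S lam r), successProb S t j
          = (roundLen S lam r : ℝ) := by
        rw [Finset.sum_congr rfl fun j _ => hsp j]; simp
      rw [e, div_self hm0]
      norm_num
    · -- t < S
      have hfrac1' : (t:ℝ)/S < 1 := by
        rw [div_lt_one hS0]; exact_mod_cast hlt
      have hs2pos : 0 < Real.sin (2*θ) := by
        rw [hs2]
        apply mul_pos (mul_pos two_pos (Real.sqrt_pos.2 hfrac0))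
          (Real.sqrt_pos.2 (by linarith))
      rcases le_or_gt (2*t) S with hcase | hcase
      · -- few solutions: critical round argument
        have hhalf : (t:ℝ)/S ≤ 1/2 := by
          rw [div_le_div_iff₀ hS0 two_pos]
          have : ((2*t : ℕ) : ℝ) ≤ (S:ℝ) := by exact_mod_cast hcase
          push_cast at this
          linarith
        have hsq : Real.sqrt ((t:ℝ)/S) ≤ Real.sin (2*θ) := by
          rw [hs2]
          have h2s : (1:ℝ) ≤ 2 * Real.sqrt (1 - (t:ℝ)/S) := by
            have hmono : Real.sqrt (1/4:ℝ) ≤ Real.sqrt (1 - (t:ℝ)/S) :=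
              Real.sqrt_le_sqrt (by linarith)
            have h4 : Real.sqrt (1/4:ℝ) = 1/2 := by
              rw [show (1/4:ℝ) = (1/2)^2 by norm_num, Real.sqrt_sq (by norm_num : (0:ℝ) ≤ 1/2)]
            linarith
          nlinarith [Real.sqrt_nonneg ((t:ℝ)/S)]
        have esqrt : Real.sqrt ((S:ℝ)/t) = 1 / Real.sqrt ((t:ℝ)/S) := by
          rw [one_div, ← Real.sqrt_inv, inv_div]
        have hinv : 1 / Real.sin (2*θ) ≤ Real.sqrt ((S:ℝ)/t) := by
          rw [esqrt]
          exact one_div_le_one_div_of_le (Real.sqrt_pos.2 hfrac0) hsq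
        have hsqrtle : Real.sqrt ((S:ℝ)/t) ≤ Real.sqrt (S:ℝ) :=
          Real.sqrt_le_sqrt (div_le_self hS0.le (by exact_mod_cast ht))
        obtain ⟨n, hn⟩ := pow_unbounded_of_one_lt (1 / Real.sin (2*θ)) h1
        have hex : ∃ r : ℕ, 1 / Real.sin (2*θ) ≤ lam ^ r := ⟨n, hn.le⟩
        refine ⟨Nat.find hex, fun r hr => ?_, ?_⟩
        · apply bbhm_fail_le S t lam r hs2pos (bbhm_one_le_roundLen S lam r hS h1.le)
          left
          have hmge : 1 / Real.sin (2*θ) ≤ (roundLen S lam r : ℝ) := by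
            refine le_trans (le_min (le_trans (Nat.find_spec hex)
              (pow_le_pow_right₀ h1.le hr)) (le_trans hinv hsqrtle)) ?_
            exact Nat.le_ceil _
          exact (div_le_iff₀ hs2pos).1 hmge
        · rcases Nat.eq_zero_or_pos (Nat.find hex) with h0 | hpos
          · rw [h0, pow_zero]; nlinarith [hsqrtSt1]
          · have hmin := Nat.find_min hex (show Nat.find hex - 1 < Nat.find hex by omega)
            push_neg at hmin
            have hrw : lam ^ (Nat.find hex) = lam ^ (Nat.find hex - 1) * lam := by
              rw [← pow_succ]; congr 1; omega
            calc lam ^ (Nat.find hex) = lam ^ (Nat.find hex - 1) * lam := hrw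
              _ ≤ (1 / Real.sin (2*θ)) * lam :=
                  mul_le_mul_of_nonneg_right hmin.le (by linarith)
              _ ≤ Real.sqrt ((S:ℝ)/t) * lam :=
                  mul_le_mul_of_nonneg_right hinv (by linarith)
              _ = lam * Real.sqrt ((S:ℝ)/t) := mul_comm _ _
      · -- many solutions: θ ≥ π/4, every round is good
        refine ⟨0, fun r _ => ?_, by rw [pow_zero]; nlinarith [hsqrtSt1]⟩
        apply bbhm_fail_le S t lam r hs2pos (bbhm_one_le_roundLen S lam r hS h1.le)
        right
        refine ⟨?_, hθ2⟩
        have hhalf : (1:ℝ)/2 ≤ (t:ℝ)/S := by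
          rw [le_div_iff₀ hS0]
          have : (S:ℝ) < ((2*t : ℕ) : ℝ) := by exact_mod_cast hcase
          push_cast at this
          linarith
        have hsinle : Real.sin (Real.pi/4) ≤ Real.sin θ := by
          rw [Real.sin_pi_div_four, hsinθ]
          have e12 : Real.sqrt (1/2 : ℝ) = Real.sqrt 2 / 2 := by
            have hsq2 : Real.sqrt 2 ^ 2 = 2 := Real.sq_sqrt (by norm_num)
            have hval : (Real.sqrt 2 / 2) ^ 2 = 1/2 := by rw [div_pow, hsq2]; norm_num
            rw [show (1/2:ℝ) = (Real.sqrt 2/2)^2 from hval.symm,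
              Real.sqrt_sq (by positivity)]
          rw [← e12]
          exact Real.sqrt_le_sqrt hhalf
        by_contra hcon
        push_neg at hcon
        have hπ := Real.pi_pos
        have := Real.strictMonoOn_sin
          (Set.mem_Icc.2 ⟨by linarith, hθ2⟩)
          (Set.mem_Icc.2 ⟨by linarith, by linarith⟩) hcon
        linarith
  calc expectedIterations S t lam
      ≤ lam ^ r₀ * (1 / (2 * (lam - 1)) + 2 / (4 - 3 * lam)) :=
        bbhm_tsum_bound S t lam h1 h2 hS hts r₀ h34
    _ ≤ (lam * Real.sqrt ((S:ℝ)/t)) * (1 / (2 * (lam - 1)) + 2 / (4 - 3 * lam)) :=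
        mul_le_mul_of_nonneg_right hr₀ hK.le
    _ = (lam * (1 / (2 * (lam - 1)) + 2 / (4 - 3 * lam))) * Real.sqrt ((S:ℝ)/t) := by ring
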